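/- arXiv:2004.11277 — 4 statements merged into one kernel-verified Lean document; each statement's English description precedes it below -/
import Mathlib

section
/- Let n ∈ ℕ, let Δ_i > 0 and k_i > 0 for i = 1,…,n, and let c ≥ 0. Let e : [0,∞) → ℝⁿ be continuous with |e_i(0)| < Δ_i for every i. Suppose that for every t ≥ 0, if |e_i(s)| < Δ_i holds for all s ∈ [0,t] and all i, then Σᵢ (k_i/2)·ln(Δ_i²/(Δ_i² − e_i(t)²)) ≤ c. Then for every t ≥ 0 and every i, e_i(t)² ≤ Δ_i²·(1 − exp(−2c/k_i)); in particular |e_i(t)| < Δ_i for all t ≥ 0 and all i. -/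
open Set Filter Topology Metric

/-- From a single-term barrier bound, extract the quadratic bound. -/
lemma barrier_key (Δ k c x : ℝ) (hΔ : 0 < Δ) (hk : 0 < k) (hx : |x| < Δ)
    (h : (k / 2) * Real.log (Δ ^ 2 / (Δ ^ 2 - x ^ 2)) ≤ c) :
    x ^ 2 ≤ Δ ^ 2 * (1 - Real.exp (-2 * c / k)) := by
  have hlt : x ^ 2 < Δ ^ 2 := by nlinarith [sq_abs x, abs_nonneg x]
  have hpos : 0 < Δ ^ 2 - x ^ 2 := by linarith
  have hXpos : 0 < Δ ^ 2 / (Δ ^ 2 - x ^ 2) := by positivity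
  have hlog : Real.log (Δ ^ 2 / (Δ ^ 2 - x ^ 2)) ≤ 2 * c / k := by
    rw [le_div_iff₀ hk]; nlinarith [h]
  have hX : Δ ^ 2 / (Δ ^ 2 - x ^ 2) ≤ Real.exp (2 * c / k) :=
    (Real.log_le_iff_le_exp hXpos).1 hlog
  have hD : Δ ^ 2 ≤ Real.exp (2 * c / k) * (Δ ^ 2 - x ^ 2) := by
    rw [div_le_iff₀ hpos] at hX; linarith
  have hE : Real.exp (-2 * c / k) * Real.exp (2 * c / k) = 1 := by
    rw [← Real.exp_add]
    norm_num [neg_div, neg_add_cancel]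
  nlinarith [Real.exp_pos (-2 * c / k), Real.exp_pos (2 * c / k),
    mul_le_mul_of_nonneg_left hD (Real.exp_pos (-2 * c / k)).le]

/-- Invariance argument: if the logarithmic barrier sum stays below `c` as long as the
trajectory stays inside the constraint region, and the trajectory starts strictly inside,
then every component satisfies `e_i(t)² ≤ Δ_i²·(1 − exp(−2c/k_i))`, and in particular
`|e_i(t)| < Δ_i` for all `t ≥ 0`. -/
theorem barrier_invariance (n : ℕ) (Δ k : Fin n → ℝ)
    (hΔ : ∀ i, 0 < Δ i) (hk : ∀ i, 0 < k i)
    (c : ℝ) (hc : 0 ≤ c) (e : ℝ → Fin n → ℝ) (hcont : ContinuousOn e (Set.Ici 0))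
    (h0 : ∀ i, |e 0 i| < Δ i)
    (hbar : ∀ t, 0 ≤ t → (∀ s ∈ Set.Icc 0 t, ∀ i, |e s i| < Δ i) →
      ∑ i, (k i / 2) * Real.log ((Δ i) ^ 2 / ((Δ i) ^ 2 - (e t i) ^ 2)) ≤ c) :
    ∀ t, 0 ≤ t → ∀ i,
      (e t i) ^ 2 ≤ (Δ i) ^ 2 * (1 - Real.exp (-2 * c / k i)) ∧ |e t i| < Δ i := by
  set B : Fin n → ℝ := fun i => (Δ i) ^ 2 * (1 - Real.exp (-2 * c / k i)) with hB
  have hBlt : ∀ i, B i < (Δ i) ^ 2 := by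
    intro i
    have h1 : 0 < Real.exp (-2 * c / k i) := Real.exp_pos _
    have h2 : 0 < (Δ i) ^ 2 := pow_pos (hΔ i) 2
    simp only [hB]
    nlinarith
  -- from sq-bound to strict abs bound
  have habs : ∀ t i, e t i ^ 2 ≤ B i → |e t i| < Δ i := by
    intro t i h
    have := hBlt i
    nlinarith [sq_abs (e t i), abs_nonneg (e t i), (hΔ i)]
  -- component continuity
  have hconti : ∀ i, ContinuousOn (fun t => e t i) (Set.Ici 0) :=
    fun i => (continuous_apply i).comp_continuousOn hcont
  -- main step: barrier hypothesis gives the sq bound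
  have step : ∀ t, 0 ≤ t → (∀ s ∈ Set.Icc 0 t, ∀ i, |e s i| < Δ i) →
      ∀ i, e t i ^ 2 ≤ B i := by
    intro t ht hall i
    have hsum := hbar t ht hall
    have hterm : (k i / 2) * Real.log ((Δ i) ^ 2 / ((Δ i) ^ 2 - (e t i) ^ 2)) ≤ c := by
      refine le_trans (Finset.single_le_sum (f := fun j =>
        (k j / 2) * Real.log ((Δ j) ^ 2 / ((Δ j) ^ 2 - (e t j) ^ 2))) ?_ (Finset.mem_univ i)) hsum
      intro j _
      have hj : |e t j| < Δ j := hall t ⟨ht, le_refl t⟩ j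
      have hlt : (e t j) ^ 2 < (Δ j) ^ 2 := by nlinarith [sq_abs (e t j), abs_nonneg (e t j)]
      have hpos : 0 < (Δ j) ^ 2 - (e t j) ^ 2 := by linarith
      have h1 : (1 : ℝ) ≤ (Δ j) ^ 2 / ((Δ j) ^ 2 - (e t j) ^ 2) := by
        rw [le_div_iff₀ hpos]; nlinarith [sq_nonneg (e t j)]
      have := Real.log_nonneg h1
      have := (hk j)
      positivity
    exact barrier_key (Δ i) (k i) c (e t i) (hΔ i) (hk i) (hall t ⟨ht, le_refl t⟩ i) hterm
  -- good at 0
  have good0 : ∀ i, e 0 i ^ 2 ≤ B i := by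
    apply step 0 le_rfl
    intro s hs i
    have : s = 0 := le_antisymm (by simpa using hs.2) hs.1
    simpa [this] using h0 i
  -- main claim by contradiction
  have main : ∀ t, 0 ≤ t → ∀ i, e t i ^ 2 ≤ B i := by
    by_contra hcon
    push_neg at hcon
    obtain ⟨t0, ht0, i0, hi0⟩ := hcon
    set U : Set ℝ := {t | 0 ≤ t ∧ ∃ i, B i < e t i ^ 2} with hU
    have hUne : U.Nonempty := ⟨t0, ht0, i0, hi0⟩
    have hUbd : BddBelow U := ⟨0, fun u hu => hu.1⟩
    set T := sInf U with hT
    have hT0 : 0 ≤ T := le_csInf hUne (fun u hu => hu.1)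
    -- everything before T is good
    have hgoodlt : ∀ s, 0 ≤ s → s < T → ∀ i, e s i ^ 2 ≤ B i := by
      intro s hs hsT i
      by_contra hbad
      push_neg at hbad
      exact absurd (csInf_le hUbd ⟨hs, i, hbad⟩) (not_le.2 hsT)
    -- T itself is good (by continuity if T > 0, by good0 if T = 0)
    have hgoodT : ∀ i, e T i ^ 2 ≤ B i := by
      rcases eq_or_lt_of_le hT0 with h | h
      · intro i; rw [← h]; exact good0 i
      · intro i
        have hne : (𝓝[Set.Ico 0 T] T).NeBot := by
          rw [← mem_closure_iff_nhdsWithin_neBot, closure_Ico (ne_of_lt h)]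
          exact ⟨hT0, le_refl T⟩
        have htend : Tendsto (fun s => e s i ^ 2) (𝓝[Set.Ico 0 T] T) (𝓝 (e T i ^ 2)) := by
          have : ContinuousWithinAt (fun s => e s i) (Set.Ici 0) T :=
            (hconti i) T (le_of_lt h)
          exact ((this.mono (fun x hx => hx.1)).pow 2).tendsto
        refine le_of_tendsto htend ?_
        filter_upwards [self_mem_nhdsWithin] with s hs
        exact hgoodlt s hs.1 hs.2 i
    have habsT : ∀ s, 0 ≤ s → s ≤ T → ∀ i, |e s i| < Δ i := by
      intro s hs hsT i
      rcases eq_or_lt_of_le hsT with h | h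
      · exact habs s i (h ▸ hgoodT i)
      · exact habs s i (hgoodlt s hs h i)
    -- find a neighborhood of T within Ici 0 where |e t i| < Δ i for all i
    have hev : ∀ᶠ t in 𝓝[Set.Ici 0] T, ∀ i, |e t i| < Δ i := by
      rw [eventually_all]
      intro i
      have hcw : ContinuousWithinAt (fun t => |e t i|) (Set.Ici 0) T :=
        ((hconti i) T hT0).abs
      exact hcw.eventually_lt_const (habsT T hT0 le_rfl i)
    obtain ⟨ε, hε, hball⟩ := Metric.mem_nhdsWithin_iff.1 hev
    obtain ⟨u, huU, huε⟩ := exists_lt_of_csInf_lt hUne (by linarith : sInf U < T + ε)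
    have hTu : T ≤ u := csInf_le hUbd huU
    -- hbar hypothesis holds on [0, u]
    have hallu : ∀ s ∈ Set.Icc 0 u, ∀ i, |e s i| < Δ i := by
      intro s hs i
      rcases le_or_gt s T with h | h
      · exact habsT s hs.1 h i
      · refine hball ⟨?_, hs.1⟩ i
        rw [mem_ball, Real.dist_eq, abs_lt]
        have huε' : u < T + ε := huε
        constructor <;> linarith [hs.2, hε, huε', h]
    obtain ⟨i, hi⟩ := huU.2
    exact absurd (step u (le_trans hT0 hTu) hallu i) (not_le.2 hi)
  intro t ht i
  exact ⟨main t ht i, habs t i (main t ht i)⟩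
end

section
/- Fix n, p ∈ ℕ, constants Δ_i > 0 and k_i > 0 (i = 1,…,n), a constant k_n > 0, positive definite diagonal n×n matrices K_r = diag{κ_i} and α = diag{α_i}, and a positive definite diagonal p×p matrix Γ. Let e, r : ℝ → ℝⁿ and θ̃ : ℝ → ℝᵖ be differentiable at t, let M : ℝ → ℝ^{n×n} be differentiable at t with M(t) symmetric, let C(t), Y_d(t) be real matrices of sizes n×n and n×p, let χ(t) ∈ ℝⁿ, and let ρ₁, ρ₂ ≥ 0 be real numbers. Define K_e = diag{k_i/(Δ_i² − e_i(t)²)}. Assume: (i) |e_i(t)| < Δ_i for all i; (ii) M(t)·r'(t) = −C(t)·r(t) − K_r·r(t) − K_e·e(t) + χ(t) − (k_n ρ₁² + ρ₂)·r(t) + Y_d(t)·θ̃(t); (iii) r(t)ᵀ(M'(t) − 2C(t))r(t) = 0; (iv) ‖χ(t)‖ ≤ ρ₁‖e(t)‖ + ρ₂‖r(t)‖; (v) e'(t) = −α·e(t) + r(t); (vi) θ̃'(t) = −Γ·Y_d(t)ᵀ·r(t). Then the function V_l(s) = ½ r(s)ᵀM(s)r(s) + Σᵢ (k_i/2)·ln(Δ_i²/(Δ_i²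 − e_i(s)²)) + ½ θ̃(s)ᵀΓ⁻¹θ̃(s) is differentiable at t and satisfies V_l'(t) ≤ −(minᵢ κ_i)·‖r(t)‖² − (minᵢ k_iα_i/(Δ_i² − e_i(t)²) − 1/(4k_n))·‖e(t)‖². -/
/-- The Euclidean norm of a vector in `ℝⁿ`. -/
noncomputable def eucNorm {n : ℕ} (v : Fin n → ℝ) : ℝ := Real.sqrt (∑ i, v i ^ 2)

lemma eucNorm_nonneg {n : ℕ} (v : Fin n → ℝ) : 0 ≤ eucNorm v := Real.sqrt_nonneg _

lemma eucNorm_sq {n : ℕ} (v : Fin n → ℝ) : eucNorm v ^ 2 = ∑ i, v i ^ 2 :=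
  Real.sq_sqrt (by positivity)

open Matrix in
lemma dot_le_eucNorm {n : ℕ} (v w : Fin n → ℝ) : v ⬝ᵥ w ≤ eucNorm v * eucNorm w := by
  have h := Finset.sum_mul_sq_le_sq_mul_sq Finset.univ v w
  calc v ⬝ᵥ w ≤ |∑ i, v i * w i| := le_abs_self _
    _ = Real.sqrt ((∑ i, v i * w i) ^ 2) := (Real.sqrt_sq_eq_abs _).symm
    _ ≤ Real.sqrt ((∑ i, v i ^ 2) * ∑ i, w i ^ 2) := Real.sqrt_le_sqrt h
    _ = eucNorm v * eucNorm w := Real.sqrt_mul (by positivity) _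

open Matrix in
lemma hasDerivAt_quadForm {m : ℕ} (t : ℝ) (x : ℝ → Fin m → ℝ) (x' : Fin m → ℝ)
    (A : ℝ → Matrix (Fin m) (Fin m) ℝ) (A' : Matrix (Fin m) (Fin m) ℝ)
    (hx : ∀ i, HasDerivAt (fun s => x s i) (x' i) t)
    (hA : ∀ i j, HasDerivAt (fun s => A s i j) (A' i j) t) :
    HasDerivAt (fun s => x s ⬝ᵥ (A s *ᵥ x s))
      (x' ⬝ᵥ (A t *ᵥ x t) + x t ⬝ᵥ (A' *ᵥ x t) + x t ⬝ᵥ (A t *ᵥ x')) t := by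
  have h : ∀ i j : Fin m, HasDerivAt (fun s => x s i * (A s i j * x s j))
      (x' i * (A t i j * x t j) + x t i * (A' i j * x t j + A t i j * x' j)) t :=
    fun i j => (hx i).mul ((hA i j).mul (hx j))
  have hij : HasDerivAt (fun s => ∑ i, ∑ j, x s i * (A s i j * x s j))
      (∑ i, ∑ j, (x' i * (A t i j * x t j) + x t i * (A' i j * x t j + A t i j * x' j))) t :=
    HasDerivAt.fun_sum (fun i _ => HasDerivAt.fun_sum (fun j _ => h i j))
  have hfun : (fun s => x s ⬝ᵥ (A s *ᵥ x s)) = fun s => ∑ i, ∑ j, x s i * (A s i j * x s j) := by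
    funext s; simp [dotProduct, Matrix.mulVec, Finset.mul_sum]
  have hval : x' ⬝ᵥ (A t *ᵥ x t) + x t ⬝ᵥ (A' *ᵥ x t) + x t ⬝ᵥ (A t *ᵥ x')
      = ∑ i, ∑ j, (x' i * (A t i j * x t j) + x t i * (A' i j * x t j + A t i j * x' j)) := by
    simp only [dotProduct, Matrix.mulVec, Finset.mul_sum, ← Finset.sum_add_distrib]
    exact Finset.sum_congr rfl fun i _ => Finset.sum_congr rfl fun j _ => by ring
  rw [hfun, hval]; exact hij

open Matrix in
lemma dot_symm_comm {m : ℕ} (A : Matrix (Fin m) (Fin m) ℝ) (hA : A.IsSymm)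
    (x y : Fin m → ℝ) : x ⬝ᵥ (A *ᵥ y) = y ⬝ᵥ (A *ᵥ x) := by
  simp only [dotProduct, Matrix.mulVec, Finset.mul_sum]
  rw [Finset.sum_comm]
  exact Finset.sum_congr rfl fun i _ => Finset.sum_congr rfl fun j _ => by
    rw [hA.apply i j]; ring

open Matrix in
lemma dot_transpose_comm {m q : ℕ} (A : Matrix (Fin m) (Fin q) ℝ)
    (x : Fin m → ℝ) (y : Fin q → ℝ) : x ⬝ᵥ (A *ᵥ y) = y ⬝ᵥ (Aᵀ *ᵥ x) := by
  simp only [dotProduct, Matrix.mulVec, Matrix.transpose_apply, Finset.mul_sum]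
  rw [Finset.sum_comm]
  exact Finset.sum_congr rfl fun i _ => Finset.sum_congr rfl fun j _ => by ring

set_option maxHeartbeats 1000000 in
open Matrix in
/-- Lyapunov-derivative inequality for the logarithmic-barrier gain design
`K_e = diag{k_i/(Δ_i² − e_i²)}`: under the closed-loop error dynamics, skew-symmetry,
the bound on `χ`, the filtered-error relation and the adaptive update law, the barrier
Lyapunov function `V_l` is differentiable at `t` with
`V_l'(t) ≤ −(minᵢ κ_i)‖r‖² − (minᵢ k_iα_i/(Δ_i² − e_i²) − 1/(4k_n))‖e‖²`. -/
theorem log_barrier_lyapunov_derivative (n p : ℕ) (hn : 0 < n)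
    (Δ k κ α : Fin n → ℝ) (kn : ℝ) (γ : Fin p → ℝ)
    (hΔ : ∀ i, 0 < Δ i) (hk : ∀ i, 0 < k i) (hkn : 0 < kn)
    (hκ : ∀ i, 0 < κ i) (hα : ∀ i, 0 < α i) (hγ : ∀ j, 0 < γ j)
    (t : ℝ) (e r : ℝ → Fin n → ℝ) (θ : ℝ → Fin p → ℝ)
    (e' r' : Fin n → ℝ) (θ' : Fin p → ℝ)
    (he : HasDerivAt e e' t) (hr : HasDerivAt r r' t) (hθ : HasDerivAt θ θ' t)
    (M : ℝ → Matrix (Fin n) (Fin n) ℝ) (M' : Matrix (Fin n) (Fin n) ℝ)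
    (hM : ∀ i j, HasDerivAt (fun s => M s i j) (M' i j) t)
    (hMsymm : (M t).IsSymm)
    (C : Matrix (Fin n) (Fin n) ℝ) (Yd : Matrix (Fin n) (Fin p) ℝ)
    (χ : Fin n → ℝ) (ρ1 ρ2 : ℝ) (hρ1 : 0 ≤ ρ1) (hρ2 : 0 ≤ ρ2)
    (hcons : ∀ i, |e t i| < Δ i)
    (hclosed : (M t) *ᵥ r' = -(C *ᵥ r t) - (Matrix.diagonal κ) *ᵥ r t
      - (Matrix.diagonal (fun i => k i / (Δ i ^ 2 - (e t i) ^ 2))) *ᵥ e t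
      + χ - (kn * ρ1 ^ 2 + ρ2) • r t + Yd *ᵥ θ t)
    (hskew : r t ⬝ᵥ ((M' - (2 : ℝ) • C) *ᵥ r t) = 0)
    (hχ : eucNorm χ ≤ ρ1 * eucNorm (e t) + ρ2 * eucNorm (r t))
    (hedot : e' = -(Matrix.diagonal α *ᵥ e t) + r t)
    (hθdot : θ' = -(Matrix.diagonal γ *ᵥ (Ydᵀ *ᵥ r t))) :
    ∃ V' : ℝ,
      HasDerivAt (fun s => (1 / 2) * (r s ⬝ᵥ (M s *ᵥ r s))
        + ∑ i, (k i / 2) * Real.log ((Δ i) ^ 2 / ((Δ i) ^ 2 - (e s i) ^ 2))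
        + (1 / 2) * (θ s ⬝ᵥ ((Matrix.diagonal γ)⁻¹ *ᵥ θ s))) V' t ∧
      V' ≤ -(⨅ i, κ i) * eucNorm (r t) ^ 2
        - ((⨅ i, k i * α i / (Δ i ^ 2 - (e t i) ^ 2)) - 1 / (4 * kn))
            * eucNorm (e t) ^ 2 := by
  haveI : Nonempty (Fin n) := ⟨⟨0, hn⟩⟩
  have hD : ∀ i, 0 < Δ i ^ 2 - e t i ^ 2 := by
    intro i
    have h1 := hcons i
    have h2 := abs_nonneg (e t i)
    nlinarith [sq_abs (e t i)]
  -- component derivatives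
  have hei := hasDerivAt_pi.mp he
  have hri := hasDerivAt_pi.mp hr
  have hθi := hasDerivAt_pi.mp hθ
  -- Part 1 : quadratic form in r
  have h1 : HasDerivAt (fun s => (1 / 2 : ℝ) * (r s ⬝ᵥ (M s *ᵥ r s)))
      ((1 / 2) * (r' ⬝ᵥ (M t *ᵥ r t) + r t ⬝ᵥ (M' *ᵥ r t) + r t ⬝ᵥ (M t *ᵥ r'))) t :=
    (hasDerivAt_quadForm t r r' M M' hri hM).const_mul (1 / 2)
  -- Part 2 : log barrier terms
  have h2 : ∀ i : Fin n, HasDerivAt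
      (fun s => (k i / 2) * Real.log ((Δ i) ^ 2 / ((Δ i) ^ 2 - (e s i) ^ 2)))
      (k i * e t i * e' i / (Δ i ^ 2 - e t i ^ 2)) t := by
    intro i
    have hpow : HasDerivAt (fun s => e s i ^ 2) (2 * e t i * e' i) t := by
      simpa [mul_comm, mul_assoc] using (hei i).fun_pow 2
    have hden : HasDerivAt (fun s => Δ i ^ 2 - e s i ^ 2) (0 - 2 * e t i * e' i) t :=
      (hasDerivAt_const t ((Δ i) ^ 2)).sub hpow
    have hDi : Δ i ^ 2 - e t i ^ 2 ≠ 0 := ne_of_gt (hD i)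
    have hdiv : HasDerivAt (fun s => (Δ i) ^ 2 / ((Δ i) ^ 2 - (e s i) ^ 2))
        ((0 * (Δ i ^ 2 - e t i ^ 2) - Δ i ^ 2 * (0 - 2 * e t i * e' i))
          / (Δ i ^ 2 - e t i ^ 2) ^ 2) t :=
      (hasDerivAt_const t ((Δ i) ^ 2)).div hden hDi
    have hq : (Δ i) ^ 2 / ((Δ i) ^ 2 - (e t i) ^ 2) ≠ 0 :=
      ne_of_gt (div_pos (pow_pos (hΔ i) 2) (hD i))
    have hlog := (hdiv.log hq).const_mul (k i / 2)
    refine hlog.congr_deriv ?_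
    have hΔi := (hΔ i).ne'
    field_simp
    ring
  have h2sum : HasDerivAt
      (fun s => ∑ i, (k i / 2) * Real.log ((Δ i) ^ 2 / ((Δ i) ^ 2 - (e s i) ^ 2)))
      (∑ i, k i * e t i * e' i / (Δ i ^ 2 - e t i ^ 2)) t :=
    HasDerivAt.fun_sum (fun i _ => h2 i)
  -- Part 3 : quadratic form in θ
  have h3 : HasDerivAt (fun s => (1 / 2 : ℝ) * (θ s ⬝ᵥ ((Matrix.diagonal γ)⁻¹ *ᵥ θ s)))
      ((1 / 2) * (θ' ⬝ᵥ ((Matrix.diagonal γ)⁻¹ *ᵥ θ t)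
        + θ t ⬝ᵥ ((0 : Matrix (Fin p) (Fin p) ℝ) *ᵥ θ t)
        + θ t ⬝ᵥ ((Matrix.diagonal γ)⁻¹ *ᵥ θ'))) t :=
    (hasDerivAt_quadForm t θ θ' (fun _ => (Matrix.diagonal γ)⁻¹) 0 hθi
      (fun i j => hasDerivAt_const t _)).const_mul (1 / 2)
  refine ⟨_, (h1.add h2sum).add h3, ?_⟩
  -- now the inequality
  have hγinv : (Matrix.diagonal γ)⁻¹ = Matrix.diagonal (fun j => (γ j)⁻¹) := by
    apply Matrix.inv_eq_right_inv
    rw [Matrix.diagonal_mul_diagonal]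
    convert Matrix.diagonal_one using 2
    funext j
    exact mul_inv_cancel₀ (hγ j).ne'
  set R := r t with hR
  set E := e t with hE
  set Θ := θ t with hΘ
  set Nr := eucNorm (r t) with hNr
  set Ne := eucNorm (e t) with hNe
  -- skew symmetry
  have hskew' : R ⬝ᵥ (M' *ᵥ R) = 2 * (R ⬝ᵥ (C *ᵥ R)) := by
    have h := hskew
    rw [Matrix.sub_mulVec, dotProduct_sub, Matrix.smul_mulVec,
      dotProduct_smul] at h
    simpa [smul_eq_mul] using sub_eq_zero.mp h
  -- closed loop
  have hclosed' : R ⬝ᵥ (M t *ᵥ r') = -(R ⬝ᵥ (C *ᵥ R)) - R ⬝ᵥ (Matrix.diagonal κ *ᵥ R)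
      - R ⬝ᵥ (Matrix.diagonal (fun i => k i / (Δ i ^ 2 - E i ^ 2)) *ᵥ E)
      + R ⬝ᵥ χ - (kn * ρ1 ^ 2 + ρ2) * (R ⬝ᵥ R) + R ⬝ᵥ (Yd *ᵥ Θ) := by
    rw [hclosed]
    simp [dotProduct_add, dotProduct_sub, dotProduct_neg,
      dotProduct_smul, smul_eq_mul]
  have hsymdot : r' ⬝ᵥ (M t *ᵥ R) = R ⬝ᵥ (M t *ᵥ r') := dot_symm_comm _ hMsymm _ _
  -- θ terms
  have hgdef : R ⬝ᵥ (Yd *ᵥ Θ) = Θ ⬝ᵥ (Ydᵀ *ᵥ R) := dot_transpose_comm _ _ _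
  have hθ1 : θ' ⬝ᵥ ((Matrix.diagonal γ)⁻¹ *ᵥ Θ) = -(Θ ⬝ᵥ (Ydᵀ *ᵥ R)) := by
    rw [hγinv, hθdot]
    simp only [dotProduct, Pi.neg_apply, Matrix.mulVec_diagonal]
    rw [← Finset.sum_neg_distrib]
    refine Finset.sum_congr rfl fun j _ => ?_
    have hγj := (hγ j).ne'
    field_simp
  have hθ2 : Θ ⬝ᵥ ((Matrix.diagonal γ)⁻¹ *ᵥ θ') = -(Θ ⬝ᵥ (Ydᵀ *ᵥ R)) := by
    rw [hγinv, hθdot]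
    simp only [dotProduct, Pi.neg_apply, Matrix.mulVec_diagonal]
    rw [← Finset.sum_neg_distrib]
    refine Finset.sum_congr rfl fun j _ => ?_
    have hγj := (hγ j).ne'
    field_simp
  -- barrier sum split
  have hbarrier : (∑ i, k i * E i * e' i / (Δ i ^ 2 - E i ^ 2))
      = -(∑ i, (k i * α i / (Δ i ^ 2 - E i ^ 2)) * E i ^ 2)
        + R ⬝ᵥ (Matrix.diagonal (fun i => k i / (Δ i ^ 2 - E i ^ 2)) *ᵥ E) := by
    simp only [dotProduct, Matrix.mulVec_diagonal]
    rw [← Finset.sum_neg_distrib, ← Finset.sum_add_distrib]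
    refine Finset.sum_congr rfl fun i _ => ?_
    have hei' : e' i = -(α i * E i) + R i := by
      rw [hedot]; simp [Matrix.mulVec_diagonal]
    rw [hei']
    have := (hD i).ne'
    field_simp
  -- norms
  have hNr2 : Nr ^ 2 = R ⬝ᵥ R := by rw [hNr, eucNorm_sq]; simp [dotProduct, sq]; rfl
  have hNe2 : Ne ^ 2 = ∑ i, E i ^ 2 := by rw [hNe, eucNorm_sq]
  -- bound on b
  have hb : (⨅ i, κ i) * Nr ^ 2 ≤ R ⬝ᵥ (Matrix.diagonal κ *ᵥ R) := by
    rw [hNr, eucNorm_sq, Finset.mul_sum]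
    simp only [dotProduct, Matrix.mulVec_diagonal]
    refine Finset.sum_le_sum fun i _ => ?_
    have hle : (⨅ i, κ i) ≤ κ i := ciInf_le (Set.Finite.bddBelow (Set.finite_range κ)) i
    have : R i * (κ i * R i) = κ i * R i ^ 2 := by ring
    rw [this]
    exact mul_le_mul_of_nonneg_right hle (sq_nonneg _)
  -- bound on barrier quadratic
  have hS : (⨅ i, k i * α i / (Δ i ^ 2 - E i ^ 2)) * Ne ^ 2
      ≤ ∑ i, (k i * α i / (Δ i ^ 2 - E i ^ 2)) * E i ^ 2 := by
    rw [hNe2, Finset.mul_sum]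
    refine Finset.sum_le_sum fun i _ => ?_
    have hle : (⨅ i, k i * α i / (Δ i ^ 2 - E i ^ 2)) ≤ k i * α i / (Δ i ^ 2 - E i ^ 2) :=
      ciInf_le (Set.Finite.bddBelow (Set.finite_range _)) i
    exact mul_le_mul_of_nonneg_right hle (sq_nonneg _)
  -- bound on d
  have hd : R ⬝ᵥ χ ≤ ρ1 * (Nr * Ne) + ρ2 * Nr ^ 2 := by
    calc R ⬝ᵥ χ ≤ eucNorm R * eucNorm χ := dot_le_eucNorm _ _
      _ ≤ Nr * (ρ1 * Ne + ρ2 * Nr) := by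
          exact mul_le_mul_of_nonneg_left hχ (eucNorm_nonneg _)
      _ = ρ1 * (Nr * Ne) + ρ2 * Nr ^ 2 := by ring
  -- Young
  have hyoung : ρ1 * (Nr * Ne) ≤ kn * ρ1 ^ 2 * Nr ^ 2 + 1 / (4 * kn) * Ne ^ 2 := by
    have h4 : (0:ℝ) < 4 * kn := by positivity
    have hq4 : 1 / (4 * kn) * (4 * kn) = 1 := one_div_mul_cancel h4.ne'
    nlinarith [sq_nonneg (2 * kn * ρ1 * Nr - Ne), hkn, hq4, h4, mul_pos h4 h4]
  have hNrnn : 0 ≤ Nr ^ 2 := sq_nonneg _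
  -- assemble
  rw [hsymdot, hclosed', hskew', hθ1, hθ2, hbarrier, hgdef]
  simp only [Matrix.zero_mulVec, dotProduct_zero]
  rw [← hNr2]
  linarith [hb, hS, hd, hyoung]
end

section
/- Fix n, p ∈ ℕ, constants Δ_i > 0 (i = 1,…,n), a constant k_n > 0, positive definite diagonal n×n matrices K_r = diag{κ_i} and α = diag{α_i}, and a positive definite diagonal p×p matrix Γ. Let e, r : ℝ → ℝⁿ and θ̃ : ℝ → ℝᵖ be differentiable at t, let M : ℝ → ℝ^{n×n} be differentiable at t with M(t) symmetric, let C(t), Y_d(t) be real matrices of sizes n×n and n×p, let χ(t) ∈ ℝⁿ, and let ρ₁, ρ₂ ≥ 0 be real numbers. Define K_e = diag{1 + tan²((π/2)·e_i(t)²/Δ_i²)}. Assume: (i) |e_i(t)| < Δ_i for all i; (ii) M(t)·r'(t) = −C(t)·r(t) − K_r·r(t) − K_e·e(t) + χ(t) − (k_n ρ₁² + ρ₂)·r(t) + Y_d(t)·θ̃(t); (iii) r(t)ᵀ(M'(t) − 2C(t))r(t) = 0; (iv) ‖χ(t)‖ ≤ ρ₁‖e(t)‖ + ρ₂‖r(t)‖;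 (v) e'(t) = −α·e(t) + r(t); (vi) θ̃'(t) = −Γ·Y_d(t)ᵀ·r(t). Then the function V_t(s) = ½ r(s)ᵀM(s)r(s) + Σᵢ (Δ_i²/π)·tan((π/2)·e_i(s)²/Δ_i²) + ½ θ̃(s)ᵀΓ⁻¹θ̃(s) is differentiable at t and satisfies V_t'(t) ≤ −(minᵢ κ_i)·‖r(t)‖² − (minᵢ α_i(1 + tan²((π/2)·e_i(t)²/Δ_i²)) − 1/(4k_n))·‖e(t)‖². -/
open Matrix in
/-- Lyapunov-derivative inequality for the tangent-barrier gain design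
`K_e = diag{1 + tan²((π/2)·e_i²/Δ_i²)}`: under the closed-loop error dynamics,
skew-symmetry, the bound on `χ`, the filtered-error relation and the adaptive update
law, the barrier Lyapunov function `V_t` is differentiable at `t` with
`V_t'(t) ≤ −(minᵢ κ_i)‖r‖² − (minᵢ α_i(1 + tan²((π/2)e_i²/Δ_i²)) − 1/(4k_n))‖e‖²`. -/
theorem tan_barrier_lyapunov_derivative (n p : ℕ) (hn : 0 < n)
    (Δ κ α : Fin n → ℝ) (kn : ℝ) (γ : Fin p → ℝ)
    (hΔ : ∀ i, 0 < Δ i) (hkn : 0 < kn)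
    (hκ : ∀ i, 0 < κ i) (hα : ∀ i, 0 < α i) (hγ : ∀ j, 0 < γ j)
    (t : ℝ) (e r : ℝ → Fin n → ℝ) (θ : ℝ → Fin p → ℝ)
    (e' r' : Fin n → ℝ) (θ' : Fin p → ℝ)
    (he : HasDerivAt e e' t) (hr : HasDerivAt r r' t) (hθ : HasDerivAt θ θ' t)
    (M : ℝ → Matrix (Fin n) (Fin n) ℝ) (M' : Matrix (Fin n) (Fin n) ℝ)
    (hM : ∀ i j, HasDerivAt (fun s => M s i j) (M' i j) t)
    (hMsymm : (M t).IsSymm)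
    (C : Matrix (Fin n) (Fin n) ℝ) (Yd : Matrix (Fin n) (Fin p) ℝ)
    (χ : Fin n → ℝ) (ρ1 ρ2 : ℝ) (hρ1 : 0 ≤ ρ1) (hρ2 : 0 ≤ ρ2)
    (hcons : ∀ i, |e t i| < Δ i)
    (hclosed : (M t) *ᵥ r' = -(C *ᵥ r t) - (Matrix.diagonal κ) *ᵥ r t
      - (Matrix.diagonal (fun i =>
          1 + Real.tan ((Real.pi / 2) * (e t i) ^ 2 / (Δ i) ^ 2) ^ 2)) *ᵥ e t
      + χ - (kn * ρ1 ^ 2 + ρ2) • r t + Yd *ᵥ θ t)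
    (hskew : r t ⬝ᵥ ((M' - (2 : ℝ) • C) *ᵥ r t) = 0)
    (hχ : eucNorm χ ≤ ρ1 * eucNorm (e t) + ρ2 * eucNorm (r t))
    (hedot : e' = -(Matrix.diagonal α *ᵥ e t) + r t)
    (hθdot : θ' = -(Matrix.diagonal γ *ᵥ (Ydᵀ *ᵥ r t))) :
    ∃ V' : ℝ,
      HasDerivAt (fun s => (1 / 2) * (r s ⬝ᵥ (M s *ᵥ r s))
        + ∑ i, ((Δ i) ^ 2 / Real.pi) * Real.tan ((Real.pi / 2) * (e s i) ^ 2 / (Δ i) ^ 2)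
        + (1 / 2) * (θ s ⬝ᵥ ((Matrix.diagonal γ)⁻¹ *ᵥ θ s))) V' t ∧
      V' ≤ -(⨅ i, κ i) * eucNorm (r t) ^ 2
        - ((⨅ i, α i * (1 + Real.tan ((Real.pi / 2) * (e t i) ^ 2 / (Δ i) ^ 2) ^ 2))
            - 1 / (4 * kn)) * eucNorm (e t) ^ 2 := by
  have hπ := Real.pi_pos
  set Ke : Fin n → ℝ := fun i =>
    1 + Real.tan ((Real.pi / 2) * (e t i) ^ 2 / (Δ i) ^ 2) ^ 2 with hKe
  -- componentwise derivatives
  have hei : ∀ i, HasDerivAt (fun s => e s i) (e' i) t := fun i => hasDerivAt_pi.mp he i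
  have hri : ∀ i, HasDerivAt (fun s => r s i) (r' i) t := fun i => hasDerivAt_pi.mp hr i
  have hθi : ∀ j, HasDerivAt (fun s => θ s j) (θ' j) t := fun j => hasDerivAt_pi.mp hθ j
  -- cos of the barrier argument is nonzero
  have hcos : ∀ i, Real.cos ((Real.pi / 2) * (e t i) ^ 2 / (Δ i) ^ 2) ≠ 0 := by
    intro i
    have h1 : (e t i) ^ 2 < (Δ i) ^ 2 := by
      have := hcons i
      have h2 := abs_nonneg (e t i)
      nlinarith [sq_abs (e t i)]
    have hΔ2 : (0:ℝ) < (Δ i) ^ 2 := pow_pos (hΔ i) 2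
    have hlt : (Real.pi / 2) * (e t i) ^ 2 / (Δ i) ^ 2 < Real.pi / 2 := by
      rw [div_lt_iff₀ hΔ2]; nlinarith
    have hge : (0:ℝ) ≤ (Real.pi / 2) * (e t i) ^ 2 / (Δ i) ^ 2 := by positivity
    exact (Real.cos_pos_of_mem_Ioo ⟨by linarith, hlt⟩).ne'
  -- inverse of the diagonal gain matrix
  have hG : (Matrix.diagonal γ)⁻¹ = Matrix.diagonal (fun j => (γ j)⁻¹) := by
    apply Matrix.inv_eq_right_inv
    rw [Matrix.diagonal_mul_diagonal]
    rw [show (fun i => γ i * (γ i)⁻¹) = fun _ => (1:ℝ) from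
      funext fun i => mul_inv_cancel₀ (hγ i).ne']
    exact Matrix.diagonal_one
  -- derivative of the kinetic part
  have hA : HasDerivAt (fun s => (1 / 2 : ℝ) * (∑ i, r s i * ∑ j, M s i j * r s j))
      ((1/2) * (∑ i, r' i * ∑ j, M t i j * r t j)
        + (1/2) * (∑ i, r t i * ∑ j, M' i j * r t j)
        + (1/2) * (∑ i, r t i * ∑ j, M t i j * r' j)) t := by
    have h := HasDerivAt.const_mul ((1:ℝ)/2)
      (HasDerivAt.fun_sum (fun i (_ : i ∈ Finset.univ) =>
        (hri i).mul (HasDerivAt.fun_sum (fun j (_ : j ∈ Finset.univ) => (hM i j).mul (hri j)))))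
    simp only [Pi.mul_apply] at h
    refine h.congr_deriv (Eq.symm ?_)
    rw [show (∑ i, (r' i * ∑ j, M t i j * r t j
        + r t i * ∑ j, (M' i j * r t j + M t i j * r' j)))
      = (∑ i, r' i * ∑ j, M t i j * r t j)
        + ((∑ i, r t i * ∑ j, M' i j * r t j) + (∑ i, r t i * ∑ j, M t i j * r' j)) from ?_]
    · ring
    · rw [← Finset.sum_add_distrib, ← Finset.sum_add_distrib]
      exact Finset.sum_congr rfl fun i _ => by rw [Finset.sum_add_distrib]; ring
  -- derivative of the barrier part
  have hB : HasDerivAt (fun s => ∑ i,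
        ((Δ i) ^ 2 / Real.pi) * Real.tan ((Real.pi / 2) * (e s i) ^ 2 / (Δ i) ^ 2))
      (∑ i, Ke i * (e t i * e' i)) t := by
    apply HasDerivAt.fun_sum
    intro i _
    have hg : HasDerivAt (fun s => (Real.pi / 2) * (e s i) ^ 2 / (Δ i) ^ 2)
        ((Real.pi / 2) * ((2:ℕ) * (e t i) ^ 1 * e' i) / (Δ i) ^ 2) t :=
      (((hei i).pow 2).const_mul (Real.pi / 2)).div_const _
    have htan := (Real.hasDerivAt_tan (hcos i)).comp t hg
    have h := htan.const_mul ((Δ i) ^ 2 / Real.pi)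
    refine h.congr_deriv (Eq.symm ?_)
    have h1 : 1 / Real.cos ((Real.pi / 2) * (e t i) ^ 2 / (Δ i) ^ 2) ^ 2 = Ke i := by
      rw [hKe, ← Real.inv_one_add_tan_sq (hcos i), one_div, inv_inv]
    rw [h1]
    have hΔ0 : (Δ i) ≠ 0 := (hΔ i).ne'
    field_simp
    ring
  -- derivative of the adaptation part
  have hC : HasDerivAt
      (fun s => (1 / 2 : ℝ) * (∑ i, θ s i * ∑ j, (Matrix.diagonal γ)⁻¹ i j * θ s j))
      (∑ j, (γ j)⁻¹ * (θ t j * θ' j)) t := by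
    have h := HasDerivAt.const_mul ((1:ℝ)/2)
      (HasDerivAt.fun_sum (fun i (_ : i ∈ Finset.univ) =>
        (hθi i).mul (HasDerivAt.fun_sum (fun j (_ : j ∈ Finset.univ) =>
          ((hθi j).const_mul ((Matrix.diagonal γ)⁻¹ i j)))))) 
    refine h.congr_deriv (Eq.symm ?_)
    rw [Finset.mul_sum]
    apply Finset.sum_congr rfl
    intro i _
    simp only [hG, Matrix.diagonal_apply, ite_mul, zero_mul, Finset.sum_ite_eq,
      Finset.mem_univ, if_true]
    ring
  refine ⟨((1/2) * (∑ i, r' i * ∑ j, M t i j * r t j)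
        + (1/2) * (∑ i, r t i * ∑ j, M' i j * r t j)
        + (1/2) * (∑ i, r t i * ∑ j, M t i j * r' j)
        + ∑ i, Ke i * (e t i * e' i))
        + ∑ j, (γ j)⁻¹ * (θ t j * θ' j), ?_, ?_⟩
  · simp only [Matrix.mulVec, dotProduct]
    exact (hA.add hB).add hC
  -- now the inequality
  -- componentwise hypotheses
  have hclosed' : ∀ i, ∑ j, M t i j * r' j
      = -(∑ j, C i j * r t j) - κ i * r t i - Ke i * e t i + χ i
        - (kn * ρ1 ^ 2 + ρ2) * r t i + ∑ j, Yd i j * θ t j := by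
    intro i
    have h := congrFun hclosed i
    simpa [Matrix.mulVec, dotProduct, Matrix.diagonal_apply, ite_mul, zero_mul,
      Finset.sum_ite_eq, Pi.add_apply, Pi.sub_apply, Pi.neg_apply, Pi.smul_apply,
      smul_eq_mul, hKe] using h
  have hedot' : ∀ i, e' i = -(α i * e t i) + r t i := by
    intro i
    have h := congrFun hedot i
    simpa [Matrix.mulVec, dotProduct, Matrix.diagonal_apply, ite_mul, zero_mul,
      Finset.sum_ite_eq] using h
  have hθdot' : ∀ j, θ' j = -(γ j * ∑ i, Yd i j * r t i) := by
    intro j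
    have h := congrFun hθdot j
    simpa [Matrix.mulVec, dotProduct, Matrix.diagonal_apply, ite_mul, zero_mul,
      Finset.sum_ite_eq, Matrix.transpose_apply, Finset.mul_sum, mul_assoc] using h
  -- skew-symmetry expanded
  have hskew' : ∑ i, r t i * ∑ j, M' i j * r t j
      = 2 * ∑ i, r t i * ∑ j, C i j * r t j := by
    have h : ∑ i, r t i * ∑ j, (M' i j - 2 * C i j) * r t j = 0 := by
      simpa [dotProduct, Matrix.mulVec, Matrix.sub_apply, Matrix.smul_apply,
        smul_eq_mul] using hskew
    have h2 : ∀ i, r t i * ∑ j, (M' i j - 2 * C i j) * r t j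
        = r t i * ∑ j, M' i j * r t j - 2 * (r t i * ∑ j, C i j * r t j) := by
      intro i
      have hin : (∑ j, (M' i j - 2 * C i j) * r t j)
          = ∑ j, M' i j * r t j - ∑ j, 2 * (C i j * r t j) := by
        rw [← Finset.sum_sub_distrib]
        exact Finset.sum_congr rfl fun j _ => by ring
      rw [hin, ← Finset.mul_sum]
      ring
    have h3 : ∑ i, r t i * ∑ j, (M' i j - 2 * C i j) * r t j
        = ∑ i, (r t i * ∑ j, M' i j * r t j)
          - ∑ i, (2 * (r t i * ∑ j, C i j * r t j)) := by
      rw [← Finset.sum_sub_distrib]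
      exact Finset.sum_congr rfl fun i _ => h2 i
    have h4 : ∑ i, (2 * (r t i * ∑ j, C i j * r t j))
        = 2 * ∑ i, (r t i * ∑ j, C i j * r t j) := (Finset.mul_sum _ _ _).symm
    rw [h3, h4] at h
    linarith
  -- symmetry: first kinetic term equals the third
  have hT1 : ∑ i, r' i * ∑ j, M t i j * r t j = ∑ i, r t i * ∑ j, M t i j * r' j := by
    calc ∑ i, r' i * ∑ j, M t i j * r t j
        = ∑ i, ∑ j, r' i * (M t i j * r t j) := by
          exact Finset.sum_congr rfl fun i _ => Finset.mul_sum _ _ _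
      _ = ∑ j, ∑ i, r' i * (M t i j * r t j) := Finset.sum_comm
      _ = ∑ i, r t i * ∑ j, M t i j * r' j := by
          apply Finset.sum_congr rfl
          intro i _
          rw [Finset.mul_sum]
          apply Finset.sum_congr rfl
          intro j _
          rw [hMsymm.apply i j]
          ring
  -- expand the third kinetic term using closed-loop dynamics
  have hT3 : ∑ i, r t i * ∑ j, M t i j * r' j
      = -(∑ i, r t i * ∑ j, C i j * r t j) - (∑ i, κ i * (r t i) ^ 2)
        - (∑ i, Ke i * (r t i * e t i)) + (∑ i, r t i * χ i)
        - (kn * ρ1 ^ 2 + ρ2) * (∑ i, (r t i) ^ 2)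
        + (∑ i, r t i * ∑ j, Yd i j * θ t j) := by
    have h : ∑ i, r t i * ∑ j, M t i j * r' j
        = ∑ i, (-(r t i * ∑ j, C i j * r t j) - κ i * (r t i) ^ 2
            - Ke i * (r t i * e t i) + r t i * χ i
            - (kn * ρ1 ^ 2 + ρ2) * (r t i) ^ 2
            + r t i * ∑ j, Yd i j * θ t j) := by
      apply Finset.sum_congr rfl
      intro i _
      rw [hclosed' i]
      ring
    rw [h]
    simp only [Finset.sum_add_distrib, Finset.sum_sub_distrib, Finset.sum_neg_distrib,
      Finset.mul_sum]
  -- barrier term expanded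
  have hBterm : ∑ i, Ke i * (e t i * e' i)
      = -(∑ i, α i * Ke i * (e t i) ^ 2) + ∑ i, Ke i * (r t i * e t i) := by
    rw [← Finset.sum_neg_distrib, ← Finset.sum_add_distrib]
    apply Finset.sum_congr rfl
    intro i _
    rw [hedot' i]
    ring
  -- cross term: Ke (r e) terms coincide
  have hcross : ∑ i, Ke i * (r t i * e t i) = ∑ i, Ke i * (r t i * e t i) := rfl
  -- adaptation term cancels the Yd term
  have hCterm : ∑ j, (γ j)⁻¹ * (θ t j * θ' j)
      = -(∑ i, r t i * ∑ j, Yd i j * θ t j) := by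
    have h1 : ∑ j, (γ j)⁻¹ * (θ t j * θ' j)
        = ∑ j, -(θ t j * ∑ i, Yd i j * r t i) := by
      apply Finset.sum_congr rfl
      intro j _
      rw [hθdot' j]
      have hγj : γ j ≠ 0 := (hγ j).ne'
      field_simp
    rw [h1, Finset.sum_neg_distrib, neg_inj]
    calc ∑ j, θ t j * ∑ i, Yd i j * r t i
        = ∑ j, ∑ i, θ t j * (Yd i j * r t i) := by
          exact Finset.sum_congr rfl fun j _ => Finset.mul_sum _ _ _
      _ = ∑ i, ∑ j, θ t j * (Yd i j * r t i) := Finset.sum_comm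
      _ = ∑ i, r t i * ∑ j, Yd i j * θ t j := by
          apply Finset.sum_congr rfl
          intro i _
          rw [Finset.mul_sum]
          apply Finset.sum_congr rfl
          intro j _
          ring
  -- norms
  have hX2 : eucNorm (r t) ^ 2 = ∑ i, (r t i) ^ 2 := by
    rw [eucNorm, Real.sq_sqrt]
    positivity
  have hY2 : eucNorm (e t) ^ 2 = ∑ i, (e t i) ^ 2 := by
    rw [eucNorm, Real.sq_sqrt]
    positivity
  have hXnn : 0 ≤ eucNorm (r t) := Real.sqrt_nonneg _
  have hYnn : 0 ≤ eucNorm (e t) := Real.sqrt_nonneg _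
  -- Cauchy–Schwarz
  have hCS : ∑ i, r t i * χ i ≤ eucNorm (r t) * eucNorm χ := by
    have h1 : (∑ i, r t i * χ i) ^ 2 ≤ (∑ i, (r t i) ^ 2) * ∑ i, (χ i) ^ 2 :=
      Finset.sum_mul_sq_le_sq_mul_sq _ _ _
    calc ∑ i, r t i * χ i ≤ √((∑ i, r t i * χ i) ^ 2) := by
          rw [Real.sqrt_sq_eq_abs]; exact le_abs_self _
      _ ≤ √((∑ i, (r t i) ^ 2) * ∑ i, (χ i) ^ 2) := Real.sqrt_le_sqrt h1
      _ = eucNorm (r t) * eucNorm χ := by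
          rw [Real.sqrt_mul (by positivity)]; rfl
  have hCSfull : ∑ i, r t i * χ i
      ≤ ρ1 * (eucNorm (r t) * eucNorm (e t)) + ρ2 * ∑ i, (r t i) ^ 2 := by
    rw [← hX2]
    have h2 : eucNorm (r t) * eucNorm χ
        ≤ eucNorm (r t) * (ρ1 * eucNorm (e t) + ρ2 * eucNorm (r t)) :=
      mul_le_mul_of_nonneg_left hχ hXnn
    calc ∑ i, r t i * χ i ≤ eucNorm (r t) * eucNorm χ := hCS
      _ ≤ eucNorm (r t) * (ρ1 * eucNorm (e t) + ρ2 * eucNorm (r t)) := h2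
      _ = ρ1 * (eucNorm (r t) * eucNorm (e t)) + ρ2 * eucNorm (r t) ^ 2 := by ring
  -- infimum bounds
  haveI : Nonempty (Fin n) := ⟨⟨0, hn⟩⟩
  have hinfκ : (⨅ i, κ i) * (∑ i, (r t i) ^ 2) ≤ ∑ i, κ i * (r t i) ^ 2 := by
    rw [Finset.mul_sum]
    apply Finset.sum_le_sum
    intro i _
    exact mul_le_mul_of_nonneg_right (ciInf_le (Finite.bddBelow_range _) i) (sq_nonneg _)
  have hinfα : (⨅ i, α i * Ke i) * (∑ i, (e t i) ^ 2) ≤ ∑ i, α i * Ke i * (e t i) ^ 2 := by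
    rw [Finset.mul_sum]
    apply Finset.sum_le_sum
    intro i _
    exact mul_le_mul_of_nonneg_right (ciInf_le (Finite.bddBelow_range _) i) (sq_nonneg _)
  -- Young's inequality
  have hYoung : ρ1 * (eucNorm (r t) * eucNorm (e t)) - kn * ρ1 ^ 2 * ∑ i, (r t i) ^ 2
      ≤ 1 / (4 * kn) * ∑ i, (e t i) ^ 2 := by
    rw [← hX2, ← hY2, show (1 : ℝ) / (4 * kn) * eucNorm (e t) ^ 2
        = eucNorm (e t) ^ 2 / (4 * kn) from by ring,
      le_div_iff₀ (by linarith : (0:ℝ) < 4 * kn)]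
    nlinarith [sq_nonneg (2 * kn * ρ1 * eucNorm (r t) - eucNorm (e t))]
  -- assemble
  rw [hX2, hY2]
  have hgoalKe : (⨅ i, α i * (1 + Real.tan ((Real.pi / 2) * (e t i) ^ 2 / (Δ i) ^ 2) ^ 2))
      = ⨅ i, α i * Ke i := rfl
  rw [hgoalKe]
  have hYe : eucNorm (e t) ^ 2 = ∑ i, (e t i) ^ 2 := hY2
  have hXe : eucNorm (r t) ^ 2 = ∑ i, (r t i) ^ 2 := hX2
  have hsum : (1/2 : ℝ) * (∑ i, r' i * ∑ j, M t i j * r t j)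
        + (1/2) * (∑ i, r t i * ∑ j, M' i j * r t j)
        + (1/2) * (∑ i, r t i * ∑ j, M t i j * r' j)
        + (∑ i, Ke i * (e t i * e' i))
        + ∑ j, (γ j)⁻¹ * (θ t j * θ' j)
      = -(∑ i, κ i * (r t i) ^ 2) - (∑ i, α i * Ke i * (e t i) ^ 2)
        + (∑ i, r t i * χ i) - (kn * ρ1 ^ 2 + ρ2) * ∑ i, (r t i) ^ 2 := by
    rw [hT1, hT3, hskew', hBterm, hCterm]
    ring
  rw [hsum]
  linarith [hCSfull, hinfκ, hinfα, hYoung]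
end

section
/- Let n ∈ ℕ and let M : ℝⁿ → ℝ^{n×n}, C : ℝⁿ × ℝⁿ → ℝ^{n×n}, G : ℝⁿ → ℝⁿ be functions, F_d an n×n matrix, and α a positive definite diagonal n×n matrix. Assume there exist positive constants m₂, ζ_{m1}, ζ_{c1}, ζ_{c2}, ζ_g such that for all ξ, ν, η ∈ ℝⁿ: ‖M(ξ)‖ ≤ m₂, ‖M(ξ) − M(ν)‖ ≤ ζ_{m1}‖ξ − ν‖, ‖C(ξ,ν)‖ ≤ ζ_{c1}‖ν‖, ‖C(ξ,ν) − C(η,ν)‖ ≤ ζ_{c2}‖ξ − η‖, C(ξ,ν)η = C(ξ,η)ν, and ‖G(ξ) − G(ν)‖ ≤ ζ_g‖ξ − ν‖ (matrix norms being operator norms). Let q_d, q̇_d, q̈_d ∈ ℝⁿ be bounded: ‖q_d‖ ≤ B₀, ‖q̇_d‖ ≤ B₁, ‖q̈_d‖ ≤ B₂. For e, r ∈ ℝⁿ set q = q_d − e, q̇ = q̇_d − (r − αe), ė = r − αe, and define χ = M(q)(q̈_d + αė) + C(q,q̇)(q̇_d + αe) + G(q) + F_d q̇ − [M(q_d)q̈_d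 + C(q_d,q̇_d)q̇_d + G(q_d) + F_d q̇_d]. Then there exist functions ρ₁, ρ₂ : [0,∞) → [0,∞), nonnegative and nondecreasing, depending only on the constants above, such that ‖χ‖ ≤ ρ₁(‖e‖)·‖e‖ + ρ₂(‖e‖)·‖r‖ for all e, r ∈ ℝⁿ. -/
lemma eucNorm_eq_norm {n : ℕ} (v : Fin n → ℝ) :
    eucNorm v = ‖(WithLp.equiv 2 (Fin n → ℝ)).symm v‖ := by
  rw [EuclideanSpace.norm_eq]
  simp [eucNorm, Real.norm_eq_abs, sq_abs]

lemma eucNorm_add_le {n : ℕ} (v w : Fin n → ℝ) :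
    eucNorm (v + w) ≤ eucNorm v + eucNorm w := by
  simp only [eucNorm_eq_norm]
  exact norm_add_le _ _

lemma eucNorm_neg {n : ℕ} (v : Fin n → ℝ) : eucNorm (-v) = eucNorm v := by
  simp [eucNorm]

lemma eucNorm_sub_le {n : ℕ} (v w : Fin n → ℝ) :
    eucNorm (v - w) ≤ eucNorm v + eucNorm w := by
  rw [sub_eq_add_neg]
  simpa [eucNorm_neg] using eucNorm_add_le v (-w)

open Matrix in
/-- Frobenius bound for `mulVec`. -/
lemma eucNorm_mulVec_le {n : ℕ} (B : Matrix (Fin n) (Fin n) ℝ) (v : Fin n → ℝ) :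
    eucNorm (B *ᵥ v) ≤ Real.sqrt (∑ i, ∑ j, B i j ^ 2) * eucNorm v := by
  rw [eucNorm, eucNorm, ← Real.sqrt_mul (by positivity)]
  apply Real.sqrt_le_sqrt
  rw [Finset.sum_mul]
  apply Finset.sum_le_sum
  intro i _
  simpa [Matrix.mulVec, dotProduct] using
    Finset.sum_mul_sq_le_sq_mul_sq Finset.univ (B i) v

open Matrix in
/-- Bound on the mismatch vector `χ` (inequality (16) of the paper): under the standard
bounding/Lipschitz properties of the robot model (matrix bounds stated as Euclidean
operator-norm bounds) and boundedness of the desired trajectory, there exist nonnegative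
nondecreasing functions `ρ₁, ρ₂` such that `‖χ‖ ≤ ρ₁(‖e‖)‖e‖ + ρ₂(‖e‖)‖r‖`. -/
theorem chi_bound (n : ℕ)
    (M : (Fin n → ℝ) → Matrix (Fin n) (Fin n) ℝ)
    (C : (Fin n → ℝ) → (Fin n → ℝ) → Matrix (Fin n) (Fin n) ℝ)
    (G : (Fin n → ℝ) → Fin n → ℝ)
    (Fd : Matrix (Fin n) (Fin n) ℝ) (α : Fin n → ℝ) (hα : ∀ i, 0 < α i)
    (m2 ζm1 ζc1 ζc2 ζg B0 B1 B2 : ℝ)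
    (hm2 : 0 < m2) (hζm1 : 0 < ζm1) (hζc1 : 0 < ζc1) (hζc2 : 0 < ζc2) (hζg : 0 < ζg)
    (hMb : ∀ ξ v : Fin n → ℝ, eucNorm (M ξ *ᵥ v) ≤ m2 * eucNorm v)
    (hML : ∀ ξ ν v : Fin n → ℝ,
      eucNorm ((M ξ - M ν) *ᵥ v) ≤ ζm1 * eucNorm (ξ - ν) * eucNorm v)
    (hCb : ∀ ξ ν v : Fin n → ℝ, eucNorm (C ξ ν *ᵥ v) ≤ ζc1 * eucNorm ν * eucNorm v)
    (hCL : ∀ ξ ν η v : Fin n → ℝ,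
      eucNorm ((C ξ ν - C η ν) *ᵥ v) ≤ ζc2 * eucNorm (ξ - η) * eucNorm v)
    (hCswitch : ∀ ξ ν η : Fin n → ℝ, C ξ ν *ᵥ η = C ξ η *ᵥ ν)
    (hGL : ∀ ξ ν : Fin n → ℝ, eucNorm (G ξ - G ν) ≤ ζg * eucNorm (ξ - ν))
    (qd qd' qdd : Fin n → ℝ)
    (hq0 : eucNorm qd ≤ B0) (hq1 : eucNorm qd' ≤ B1) (hq2 : eucNorm qdd ≤ B2) :
    ∃ ρ1 ρ2 : ℝ → ℝ,
      (∀ s ∈ Set.Ici (0 : ℝ), 0 ≤ ρ1 s) ∧ (∀ s ∈ Set.Ici (0 : ℝ), 0 ≤ ρ2 s) ∧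
      MonotoneOn ρ1 (Set.Ici 0) ∧ MonotoneOn ρ2 (Set.Ici 0) ∧
      ∀ e r : Fin n → ℝ,
        eucNorm (M (qd - e) *ᵥ (qdd + Matrix.diagonal α *ᵥ (r - Matrix.diagonal α *ᵥ e))
          + C (qd - e) (qd' - (r - Matrix.diagonal α *ᵥ e)) *ᵥ (qd' + Matrix.diagonal α *ᵥ e)
          + G (qd - e) + Fd *ᵥ (qd' - (r - Matrix.diagonal α *ᵥ e))
          - (M qd *ᵥ qdd + C qd qd' *ᵥ qd' + G qd + Fd *ᵥ qd'))
        ≤ ρ1 (eucNorm e) * eucNorm e + ρ2 (eucNorm e) * eucNorm r := by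
  set A : Matrix (Fin n) (Fin n) ℝ := Matrix.diagonal α with hA
  set Am : ℝ := Real.sqrt (∑ i, ∑ j, A i j ^ 2) with hAmdef
  set Fm : ℝ := Real.sqrt (∑ i, ∑ j, Fd i j ^ 2) with hFmdef
  have hAm : 0 ≤ Am := Real.sqrt_nonneg _
  have hFm : 0 ≤ Fm := Real.sqrt_nonneg _
  have hB1 : 0 ≤ B1 := le_trans (eucNorm_nonneg qd') hq1
  have hB2 : 0 ≤ B2 := le_trans (eucNorm_nonneg qdd) hq2
  refine ⟨fun s => ζm1 * B2 + m2 * (Am * Am) + ζc2 * B1 + 2 * (ζc1 * (Am * B1))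
      + ζc1 * (Am * Am) * s + ζg + Fm * Am,
    fun s => m2 * Am + ζc1 * B1 + ζc1 * Am * s + Fm, ?_, ?_, ?_, ?_, ?_⟩
  · intro s hs
    have hs' : 0 ≤ s := hs
    have h1 := mul_nonneg hζm1.le hB2
    have h2 := mul_nonneg hm2.le (mul_nonneg hAm hAm)
    have h3 := mul_nonneg hζc2.le hB1
    have h4 := mul_nonneg hζc1.le (mul_nonneg hAm hB1)
    have h5 := mul_nonneg (mul_nonneg hζc1.le (mul_nonneg hAm hAm)) hs'
    have h6 := mul_nonneg hFm hAm
    dsimp only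
    linarith
  · intro s hs
    have hs' : 0 ≤ s := hs
    have h1 := mul_nonneg hm2.le hAm
    have h2 := mul_nonneg hζc1.le hB1
    have h3 := mul_nonneg (mul_nonneg hζc1.le hAm) hs'
    dsimp only
    linarith
  · intro a ha b hb hab
    have := mul_le_mul_of_nonneg_left hab (mul_nonneg hζc1.le (mul_nonneg hAm hAm))
    simp only
    linarith
  · intro a ha b hb hab
    have := mul_le_mul_of_nonneg_left hab (mul_nonneg hζc1.le hAm)
    simp only
    linarith
  · intro e r
    set ne₀ : ℝ := eucNorm e with hne₀
    set nr₀ : ℝ := eucNorm r with hnr₀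
    have hne : 0 ≤ ne₀ := eucNorm_nonneg e
    have hnr : 0 ≤ nr₀ := eucNorm_nonneg r
    set edot : Fin n → ℝ := r - A *ᵥ e with hedotdef
    set q : Fin n → ℝ := qd - e with hqdef
    set qv : Fin n → ℝ := qd' - edot with hqvdef
    -- basic vector-norm facts
    have hAe : eucNorm (A *ᵥ e) ≤ Am * ne₀ := eucNorm_mulVec_le A e
    have hedot : eucNorm edot ≤ nr₀ + Am * ne₀ :=
      le_trans (eucNorm_sub_le r (A *ᵥ e)) (by linarith)
    have hqsub : q - qd = -e := by rw [hqdef]; abel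
    have hqvsub : qv - qd' = -edot := by rw [hqvdef]; abel
    have hqv : eucNorm qv ≤ B1 + (nr₀ + Am * ne₀) := by
      refine le_trans (eucNorm_sub_le qd' edot) ?_
      linarith
    -- decomposition of χ
    have key : M q *ᵥ (qdd + A *ᵥ edot) + C q qv *ᵥ (qd' + A *ᵥ e) + G q + Fd *ᵥ qv
        - (M qd *ᵥ qdd + C qd qd' *ᵥ qd' + G qd + Fd *ᵥ qd')
        = ((M q - M qd) *ᵥ qdd) + (M q *ᵥ (A *ᵥ edot))
          + ((C q qv - C qd qv) *ᵥ qd') + (C qd qd' *ᵥ (qv - qd'))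
          + (C q qv *ᵥ (A *ᵥ e)) + (G q - G qd) + (Fd *ᵥ (qv - qd')) := by
      simp only [Matrix.sub_mulVec, Matrix.mulVec_add, Matrix.mulVec_sub]
      rw [hCswitch qd qd' qv]
      abel
    rw [key]
    -- bounds on the seven pieces
    have h1 : eucNorm ((M q - M qd) *ᵥ qdd) ≤ ζm1 * ne₀ * B2 := by
      have h := hML q qd qdd
      rw [hqsub, eucNorm_neg] at h
      have := mul_le_mul_of_nonneg_left hq2 (mul_nonneg hζm1.le hne)
      calc eucNorm ((M q - M qd) *ᵥ qdd) ≤ ζm1 * ne₀ * eucNorm qdd := h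
        _ ≤ ζm1 * ne₀ * B2 := this
    have h2 : eucNorm (M q *ᵥ (A *ᵥ edot)) ≤ m2 * (Am * (nr₀ + Am * ne₀)) := by
      refine le_trans (hMb q (A *ᵥ edot)) ?_
      have hA' : eucNorm (A *ᵥ edot) ≤ Am * (nr₀ + Am * ne₀) :=
        le_trans (eucNorm_mulVec_le A edot)
          (mul_le_mul_of_nonneg_left hedot hAm)
      exact mul_le_mul_of_nonneg_left hA' hm2.le
    have h3 : eucNorm ((C q qv - C qd qv) *ᵥ qd') ≤ ζc2 * ne₀ * B1 := by
      have h := hCL q qv qd qd'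
      rw [hqsub, eucNorm_neg] at h
      have := mul_le_mul_of_nonneg_left hq1 (mul_nonneg hζc2.le hne)
      calc eucNorm ((C q qv - C qd qv) *ᵥ qd') ≤ ζc2 * ne₀ * eucNorm qd' := h
        _ ≤ ζc2 * ne₀ * B1 := this
    have hqv' : eucNorm (qv - qd') ≤ nr₀ + Am * ne₀ := by
      rw [hqvsub, eucNorm_neg]; exact hedot
    have h4 : eucNorm (C qd qd' *ᵥ (qv - qd')) ≤ ζc1 * B1 * (nr₀ + Am * ne₀) := by
      refine le_trans (hCb qd qd' (qv - qd')) ?_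
      have h1' : ζc1 * eucNorm qd' ≤ ζc1 * B1 := mul_le_mul_of_nonneg_left hq1 hζc1.le
      have h2' : 0 ≤ eucNorm (qv - qd') := eucNorm_nonneg _
      nlinarith [mul_nonneg hζc1.le hB1]
    have h5 : eucNorm (C q qv *ᵥ (A *ᵥ e))
        ≤ ζc1 * (B1 + (nr₀ + Am * ne₀)) * (Am * ne₀) := by
      refine le_trans (hCb q qv (A *ᵥ e)) ?_
      have h0 : 0 ≤ eucNorm (A *ᵥ e) := eucNorm_nonneg _
      have h1' : ζc1 * eucNorm qv ≤ ζc1 * (B1 + (nr₀ + Am * ne₀)) :=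
        mul_le_mul_of_nonneg_left hqv hζc1.le
      have h2' : 0 ≤ ζc1 * eucNorm qv := mul_nonneg hζc1.le (eucNorm_nonneg _)
      nlinarith
    have h6 : eucNorm (G q - G qd) ≤ ζg * ne₀ := by
      have h := hGL q qd
      rw [hqsub, eucNorm_neg] at h
      exact h
    have h7 : eucNorm (Fd *ᵥ (qv - qd')) ≤ Fm * (nr₀ + Am * ne₀) :=
      le_trans (eucNorm_mulVec_le Fd (qv - qd'))
        (mul_le_mul_of_nonneg_left hqv' hFm)
    -- triangle inequality over the seven pieces
    have tri : eucNorm (((M q - M qd) *ᵥ qdd) + (M q *ᵥ (A *ᵥ edot))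
          + ((C q qv - C qd qv) *ᵥ qd') + (C qd qd' *ᵥ (qv - qd'))
          + (C q qv *ᵥ (A *ᵥ e)) + (G q - G qd) + (Fd *ᵥ (qv - qd')))
        ≤ eucNorm ((M q - M qd) *ᵥ qdd) + eucNorm (M q *ᵥ (A *ᵥ edot))
          + eucNorm ((C q qv - C qd qv) *ᵥ qd') + eucNorm (C qd qd' *ᵥ (qv - qd'))
          + eucNorm (C q qv *ᵥ (A *ᵥ e)) + eucNorm (G q - G qd)
          + eucNorm (Fd *ᵥ (qv - qd')) := by
      refine le_trans (eucNorm_add_le _ _) (add_le_add ?_ le_rfl)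
      refine le_trans (eucNorm_add_le _ _) (add_le_add ?_ le_rfl)
      refine le_trans (eucNorm_add_le _ _) (add_le_add ?_ le_rfl)
      refine le_trans (eucNorm_add_le _ _) (add_le_add ?_ le_rfl)
      refine le_trans (eucNorm_add_le _ _) (add_le_add ?_ le_rfl)
      exact eucNorm_add_le _ _
    refine le_trans tri ?_
    dsimp only
    calc eucNorm ((M q - M qd) *ᵥ qdd) + eucNorm (M q *ᵥ (A *ᵥ edot))
          + eucNorm ((C q qv - C qd qv) *ᵥ qd') + eucNorm (C qd qd' *ᵥ (qv - qd'))
          + eucNorm (C q qv *ᵥ (A *ᵥ e)) + eucNorm (G q - G qd)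
          + eucNorm (Fd *ᵥ (qv - qd'))
        ≤ ζm1 * ne₀ * B2 + m2 * (Am * (nr₀ + Am * ne₀)) + ζc2 * ne₀ * B1
          + ζc1 * B1 * (nr₀ + Am * ne₀) + ζc1 * (B1 + (nr₀ + Am * ne₀)) * (Am * ne₀)
          + ζg * ne₀ + Fm * (nr₀ + Am * ne₀) := by linarith
      _ = (ζm1 * B2 + m2 * (Am * Am) + ζc2 * B1 + 2 * (ζc1 * (Am * B1))
          + ζc1 * (Am * Am) * ne₀ + ζg + Fm * Am) * ne₀
          + (m2 * Am + ζc1 * B1 + ζc1 * Am * ne₀ + Fm) * nr₀ := by ring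
end
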